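/- The probability of the event Erasure_A satisfies K(1−p) · ( p(q−K)/(q−1) )^{K−1} ≤ P(Erasure_A) ≤ K(1−p)·p^{K−1}, and the left inequality is strict. -/

import Mathlib

open scoped BigOperators Classical

/-- Number of coordinates of `y` equal to the symbol `a`. -/
def cntY {A : Type*} [DecidableEq A] {K : ℕ} (y : Fin K → A) (a : A) : ℕ :=
  (Finset.univ.filter fun j => y j = a).card

/-- Erasure_A: the coordinates of `y` are pairwise distinct and some coordinate equals `c`. -/
def IsErasureA {A : Type*} {K : ℕ} (c : A) (y : Fin K → A) : Prop :=
  Function.Injective y ∧ ∃ j, y j = c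

/-- Erasure_B: the coordinates of `y` are pairwise distinct and no coordinate equals `c`. -/
def IsErasureB {A : Type*} {K : ℕ} (c : A) (y : Fin K → A) : Prop :=
  Function.Injective y ∧ ∀ j, y j ≠ c

/-- Success: some symbol occurs at least twice, strictly more often than every other symbol,
and that symbol equals `c`. -/
def IsSuccess {A : Type*} [DecidableEq A] {K : ℕ} (c : A) (y : Fin K → A) : Prop :=
  2 ≤ cntY y c ∧ ∀ a, a ≠ c → cntY y a < cntY y c

/-- Error: the complement of Erasure_A ∪ Erasure_B ∪ Success. -/
def IsError {A : Type*} [DecidableEq A] {K : ℕ} (c : A) (y : Fin K → A) : Prop :=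
  ¬(IsErasureA c y ∨ IsErasureB c y ∨ IsSuccess c y)

/-- Probability of the event `E` for a random vector `Y ∈ A^K` with i.i.d. coordinates,
each equal to `c` with probability `1 − p` and equal to each other fixed symbol with
probability `p/(q−1)`. -/
noncomputable def prEvent {A : Type*} [Fintype A] [DecidableEq A] (q K : ℕ) (p : ℝ)
    (c : A) (E : (Fin K → A) → Prop) : ℝ :=
  ∑ y : Fin K → A,
    (∏ j : Fin K, (if y j = c then 1 - p else p / ((q : ℝ) - 1))) *
      (if E y then 1 else 0)


-- Auxiliary lemmas ------------------------------------------------------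

lemma aux_card_inj (A : Type*) [Fintype A] (K : ℕ) :
    Nat.card {y : Fin K → A // Function.Injective y}
      = (Fintype.card A).descFactorial K := by
  rw [Nat.card_congr (Equiv.subtypeInjectiveEquivEmbedding (Fin K) A),
    Nat.card_eq_fintype_card, Fintype.card_embedding_eq, Fintype.card_fin]

lemma aux_card_inj_avoid {A : Type*} [Fintype A] [DecidableEq A] (K : ℕ) (c : A) :
    Nat.card {y : Fin K → A // Function.Injective y ∧ ∀ j, y j ≠ c}
      = (Fintype.card A - 1).descFactorial K := by
  have e : {y : Fin K → A // Function.Injective y ∧ ∀ j, y j ≠ c}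
      ≃ {g : Fin K → {a : A // a ≠ c} // Function.Injective g} :=
  { toFun := fun y => ⟨fun j => ⟨y.1 j, y.2.2 j⟩,
      fun j k h => y.2.1 (congrArg Subtype.val h)⟩
    invFun := fun g => ⟨fun j => (g.1 j).1,
      ⟨fun j k h => g.2 (Subtype.ext h), fun j => (g.1 j).2⟩⟩
    left_inv := fun y => rfl
    right_inv := fun g => rfl }
  rw [Nat.card_congr e, aux_card_inj]
  congr 1
  rw [Fintype.card_subtype_compl, Fintype.card_subtype_eq]

lemma aux_df1 {q K : ℕ} (hq : 1 ≤ q) (hK : 1 ≤ K) :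
    q.descFactorial K = q * (q - 1).descFactorial (K - 1) := by
  obtain ⟨q', rfl⟩ : ∃ q', q = q' + 1 := ⟨q - 1, by omega⟩
  obtain ⟨K', rfl⟩ : ∃ K', K = K' + 1 := ⟨K - 1, by omega⟩
  simp only [Nat.add_sub_cancel]
  rw [Nat.succ_descFactorial_succ]

lemma aux_df2 {q K : ℕ} (hK : 1 ≤ K) (hq : K < q) :
    (q - 1).descFactorial K = (q - K) * (q - 1).descFactorial (K - 1) := by
  obtain ⟨K', rfl⟩ : ∃ K', K = K' + 1 := ⟨K - 1, by omega⟩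
  rw [Nat.descFactorial_succ]
  simp only [Nat.add_sub_cancel]
  have h : q - 1 - K' = q - (K' + 1) := by omega
  rw [h]

lemma aux_df_lt {q K : ℕ} (hK : 2 ≤ K) (hq : K < q) :
    (q - K) ^ (K - 1) < (q - 1).descFactorial (K - 1) := by
  rw [Nat.descFactorial_eq_prod_range]
  have h0 : (q - K) ^ (K - 1) = ∏ _i ∈ Finset.range (K - 1), (q - K) := by
    rw [Finset.prod_const, Finset.card_range]
  rw [h0]
  refine Finset.prod_lt_prod_of_nonempty (fun i _ => by omega) (fun i hi => ?_)
    ⟨0, Finset.mem_range.2 (by omega)⟩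
  have := Finset.mem_range.1 hi
  omega

lemma aux_card_erasureA {A : Type*} [Fintype A] [DecidableEq A] {q K : ℕ}
    (hK : 2 ≤ K) (hq : K < q) (hA : Fintype.card A = q) (c : A) :
    (Finset.univ.filter fun y : Fin K → A => IsErasureA c y).card
      = K * (q - 1).descFactorial (K - 1) := by
  have h1q : 1 ≤ q := by omega
  have h1K : 1 ≤ K := by omega
  have hq2 : q * (q - 1).descFactorial (K - 1)
      = K * (q - 1).descFactorial (K - 1) + (q - K) * (q - 1).descFactorial (K - 1) := by
    have h : q = K + (q - K) := by omega
    have h2 : K + (q - K) - K = q - K := by omega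
    rw [h, Nat.add_mul, h2]
  have e1 : (Finset.univ.filter fun y : Fin K → A => IsErasureA c y)
      = ((Finset.univ.filter fun y : Fin K → A => Function.Injective y).filter
          fun y => ∃ j, y j = c) := by
    ext y
    simp [IsErasureA]
    convert (Finset.mem_filter (s := Finset.univ) (a := y) (p := fun y : Fin K → A => Function.Injective y ∧ ∃ j, y j = c)).trans ⟨fun h => h.2, fun h => ⟨Finset.mem_univ _, h⟩⟩
    exact Finset.filter_congr_decidable _ _ _
  have e2 : (Finset.univ.filter fun y : Fin K → A =>
        Function.Injective y ∧ ∀ j, y j ≠ c)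
      = ((Finset.univ.filter fun y : Fin K → A => Function.Injective y).filter
          fun y => ¬ ∃ j, y j = c) := by
    ext y
    simp [not_exists, and_assoc]
  have hI : (Finset.univ.filter fun y : Fin K → A => Function.Injective y).card
      = q * (q - 1).descFactorial (K - 1) := by
    have h := aux_card_inj A K
    rw [Nat.card_eq_fintype_card, Fintype.card_subtype] at h
    rw [h, hA, aux_df1 (q := q) (K := K) h1q h1K]
  have hT : (Finset.univ.filter fun y : Fin K → A =>
      Function.Injective y ∧ ∀ j, y j ≠ c).card
      = (q - K) * (q - 1).descFactorial (K - 1) := by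
    have h := aux_card_inj_avoid (A := A) K c
    rw [Nat.card_eq_fintype_card, Fintype.card_subtype] at h
    rw [h, hA, aux_df2 (q := q) (K := K) h1K hq]
  have key : (Finset.univ.filter fun y : Fin K → A => IsErasureA c y).card
      + (Finset.univ.filter fun y : Fin K → A =>
          Function.Injective y ∧ ∀ j, y j ≠ c).card
      = (Finset.univ.filter fun y : Fin K → A => Function.Injective y).card := by
    rw [e1, e2]
    exact Finset.card_filter_add_card_filter_not
      (p := fun y : Fin K → A => ∃ j, y j = c)
  have key2 : (Finset.univ.filter fun y : Fin K → A => IsErasureA c y).card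
      + (q - K) * (q - 1).descFactorial (K - 1)
      = K * (q - 1).descFactorial (K - 1) + (q - K) * (q - 1).descFactorial (K - 1) := by
    rw [← hq2, ← hI, ← hT]
    exact key
  exact Nat.add_right_cancel key2

lemma aux_weight_eq {A : Type*} [DecidableEq A] {K : ℕ} (q : ℕ) (p : ℝ) (c : A)
    {y : Fin K → A} (hy : IsErasureA c y) :
    (∏ j : Fin K, (if y j = c then 1 - p else p / ((q : ℝ) - 1)))
      = (1 - p) * (p / ((q : ℝ) - 1)) ^ (K - 1) := by
  obtain ⟨hinj, j0, hj0⟩ := hy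
  have hc1 : (Finset.univ.filter fun j : Fin K => y j = c).card = 1 := by
    rw [Finset.card_eq_one]
    refine ⟨j0, ?_⟩
    ext j
    simp only [Finset.mem_filter, Finset.mem_univ, true_and, Finset.mem_singleton]
    constructor
    · intro h; exact hinj (h.trans hj0.symm)
    · intro h; rw [h, hj0]
  have hsum : (Finset.univ.filter fun j : Fin K => y j = c).card
      + (Finset.univ.filter fun j : Fin K => ¬ y j = c).card = K := by
    rw [Finset.card_filter_add_card_filter_not, Finset.card_univ, Fintype.card_fin]
  have hc2 : (Finset.univ.filter fun j : Fin K => ¬ y j = c).card = K - 1 := by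
    omega
  rw [Finset.prod_ite, Finset.prod_const, Finset.prod_const, hc1, hc2, pow_one]

lemma aux_prEvent_eq {A : Type*} [Fintype A] [DecidableEq A] (q K : ℕ) (p : ℝ) (c : A) :
    prEvent q K p c (IsErasureA c)
      = ((Finset.univ.filter fun y : Fin K → A => IsErasureA c y).card : ℝ)
          * ((1 - p) * (p / ((q : ℝ) - 1)) ^ (K - 1)) := by
  unfold prEvent
  rw [Finset.sum_congr rfl (fun y _ => (mul_ite _ _ _ _).trans (by rw [mul_one, mul_zero]))]
  rw [← Finset.sum_filter]
  rw [Finset.sum_congr rfl (fun y hy => aux_weight_eq q p c (Finset.mem_filter.1 hy).2)]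
  rw [Finset.sum_const, nsmul_eq_mul]

/-- K(1−p)(p(q−K)/(q−1))^{K−1} < P(Erasure_A) ≤ K(1−p)p^{K−1}. -/
theorem stmt8 {A : Type*} [Fintype A] [DecidableEq A] (q K : ℕ)
    (hK : 2 ≤ K) (hq : K < q) (p : ℝ) (hp : p ∈ Set.Ioo (0 : ℝ) 1)
    (hA : Fintype.card A = q) (c : A) :
    (K : ℝ) * (1 - p) * (p * ((q : ℝ) - (K : ℝ)) / ((q : ℝ) - 1)) ^ (K - 1) <
      prEvent q K p c (IsErasureA c) ∧
    prEvent q K p c (IsErasureA c) ≤ (K : ℝ) * (1 - p) * p ^ (K - 1) := by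
  obtain ⟨hp0, hp1⟩ := hp
  have hP : prEvent q K p c (IsErasureA c)
      = ((K:ℝ) * (1 - p) * (p / ((q:ℝ) - 1)) ^ (K - 1))
          * (((q - 1).descFactorial (K - 1) : ℕ) : ℝ) := by
    rw [aux_prEvent_eq, aux_card_erasureA hK hq hA]
    push_cast
    ring
  have hDlt := aux_df_lt hK hq
  have hDle : (q - 1).descFactorial (K - 1) ≤ (q - 1) ^ (K - 1) :=
    Nat.descFactorial_le_pow _ _
  have hqR : (1:ℝ) < (q:ℝ) := by exact_mod_cast (by omega : 1 < q)
  have hq1 : (0:ℝ) < (q:ℝ) - 1 := by linarith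
  have hr : 0 < p / ((q:ℝ) - 1) := div_pos hp0 hq1
  have hKR : (0:ℝ) < (K:ℝ) := by exact_mod_cast (by omega : 0 < K)
  have hC : 0 < (K:ℝ) * (1 - p) * (p / ((q:ℝ) - 1)) ^ (K - 1) :=
    mul_pos (mul_pos hKR (by linarith)) (pow_pos hr _)
  constructor
  · rw [hP]
    have hlt : ((q:ℝ) - K) ^ (K - 1) < (((q - 1).descFactorial (K - 1) : ℕ) : ℝ) := by
      calc ((q:ℝ) - K) ^ (K - 1) = (((q - K : ℕ) : ℝ)) ^ (K - 1) := by
            rw [Nat.cast_sub hq.le]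
        _ = (((q - K) ^ (K - 1) : ℕ) : ℝ) := by push_cast; ring
        _ < _ := by exact_mod_cast hDlt
    calc (K : ℝ) * (1 - p) * (p * ((q : ℝ) - (K : ℝ)) / ((q : ℝ) - 1)) ^ (K - 1)
        = ((K:ℝ) * (1 - p) * (p / ((q:ℝ) - 1)) ^ (K - 1)) * ((q:ℝ) - K) ^ (K - 1) := by
          rw [show p * ((q:ℝ) - (K:ℝ)) / ((q:ℝ) - 1)
              = p / ((q:ℝ) - 1) * ((q:ℝ) - (K:ℝ)) from by ring, mul_pow]
          ring
      _ < ((K:ℝ) * (1 - p) * (p / ((q:ℝ) - 1)) ^ (K - 1))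
            * (((q - 1).descFactorial (K - 1) : ℕ) : ℝ) :=
          mul_lt_mul_of_pos_left hlt hC
  · rw [hP]
    have hle : (((q - 1).descFactorial (K - 1) : ℕ) : ℝ) ≤ ((q:ℝ) - 1) ^ (K - 1) := by
      calc (((q - 1).descFactorial (K - 1) : ℕ) : ℝ)
          ≤ (((q - 1) ^ (K - 1) : ℕ) : ℝ) := by exact_mod_cast hDle
        _ = ((q:ℝ) - 1) ^ (K - 1) := by
            push_cast [Nat.cast_sub (by omega : 1 ≤ q)]; ring
    calc ((K:ℝ) * (1 - p) * (p / ((q:ℝ) - 1)) ^ (K - 1))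
            * (((q - 1).descFactorial (K - 1) : ℕ) : ℝ)
        ≤ ((K:ℝ) * (1 - p) * (p / ((q:ℝ) - 1)) ^ (K - 1)) * ((q:ℝ) - 1) ^ (K - 1) :=
          mul_le_mul_of_nonneg_left hle hC.le
      _ = (K : ℝ) * (1 - p) * p ^ (K - 1) := by
          have hbase : (p / ((q:ℝ) - 1)) ^ (K - 1) * ((q:ℝ) - 1) ^ (K - 1)
              = p ^ (K - 1) := by
            rw [← mul_pow, div_mul_cancel₀ _ hq1.ne']
          rw [← hbase]
          ring
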